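/- Let n ≥ 1, let 0 ≤ k ≤ n−1, and set l := max{k, n−k−1}. For every i with 0 ≤ i ≤ l: applying bitwise complementation to both endpoints of every edge of the i-lexical matching M^i_{n,k} yields exactly the matching M^{l−i}_{n,n−k−1}; applying string reversal to both endpoints of every edge of M^i_{n,k} yields exactly the matching M^{l−i}_{n,k}; consequently, applying complementation followed by reversal to both endpoints of every edge of M^i_{n,k} yields exactly the matching M^i_{n,n−k−1}. -/

import Mathlib

/-- The Hamming weight of a bitstring of length `n`, i.e., its number of 1-bits. -/
def wt {n : ℕ} (x : Fin n → Bool) : ℕ := (Finset.univ.filter fun i => x i = true).card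

/-- The `n`-dimensional hypercube: vertices are bitstrings of length `n`, two of which are
adjacent iff they differ in exactly one position. -/
def cube (n : ℕ) : SimpleGraph (Fin n → Bool) where
  Adj x y := hammingDist x y = 1
  symm := ⟨fun x y (h : hammingDist x y = 1) => (hammingDist_comm y x).trans h⟩
  loopless := ⟨fun x (h : hammingDist x x = 1) => by simp [hammingDist_self] at h⟩
/-- The number of 1-bits among the first `j` bits of `x` (interpreting a bitstring as a
lattice path, this determines the height after `j` steps). -/
def onesUpTo {n : ℕ} (x : Fin n → Bool) (j : ℕ) : ℕ :=
  (Finset.univ.filter fun i : Fin n => i.val < j ∧ x i = true).card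

/-- The height of the lattice path of `x` after `j` steps: number of 1s minus number of 0s
among the first `j` bits (appended steps beyond the length of `x` being down-steps). -/
def hgt {n : ℕ} (x : Fin n → Bool) (j : ℕ) : ℤ := 2 * (onesUpTo x j : ℤ) - (j : ℤ)

/-- The length of the extended lattice path `x^↑`: if the final height `2·wt x − n` is `≥ −1`,
down-steps are appended until the path ends at height `−1` (total length `2·wt x + 1`);
otherwise nothing is appended. -/
def extLen {n : ℕ} (x : Fin n → Bool) : ℕ := max n (2 * wt x + 1)

/-- Position `j` (0-indexed) of the extended path `x^↑` is a down-step: either it is a 0-bit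
of `x`, or one of the appended down-steps. -/
def isDownStep {n : ℕ} (x : Fin n → Bool) (j : ℕ) : Prop :=
  j < extLen x ∧ ∀ h : j < n, x ⟨j, h⟩ = false

/-- The `i`-lexical matching `M^i_{n,k}` between levels `k` and `k+1` of the `n`-cube, as a
relation: `lexUp n k i x y` holds iff `x` lies in level `k` and `y = M^{i,↑}_{n,k}(x)`, i.e.,
`y` is obtained from `x` by flipping to 1 the 0-bit at the `i`-th down-step of `x^↑` in the
order of decreasing starting height, ties broken from right to left, counting from 0,
provided this down-step lies within `x`. -/
def lexUp (n k i : ℕ) (x y : Fin n → Bool) : Prop :=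
  wt x = k ∧ ∃ d : ℕ, d < n ∧ isDownStep x d ∧
    ({j : ℕ | isDownStep x j ∧ (hgt x d < hgt x j ∨ (hgt x j = hgt x d ∧ d < j))}).ncard = i ∧
    y = fun t : Fin n => if t.val = d then true else x t
/-- Bitwise complementation of a bitstring. -/
def bcomp {n : ℕ} (x : Fin n → Bool) : Fin n → Bool := fun i => !(x i)

/-- Reversal of a bitstring. -/
def brev {n : ℕ} (x : Fin n → Bool) : Fin n → Bool := fun i => x i.rev


namespace LexSym
open Finset
variable {n : ℕ}

instance (x : Fin n → Bool) (j : ℕ) : Decidable (isDownStep x j) :=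
  decidable_of_iff (j < extLen x ∧ ∀ h : j < n, x ⟨j, h⟩ = false) Iff.rfl

lemma wt_le_n (x : Fin n → Bool) : wt x ≤ n := by
  have := Finset.card_filter_le (Finset.univ : Finset (Fin n)) (fun i => x i = true)
  simpa [wt] using this

lemma onesUpTo_zero (x : Fin n → Bool) : onesUpTo x 0 = 0 := by simp [onesUpTo]

lemma onesUpTo_succ (x : Fin n → Bool) (j : ℕ) :
    onesUpTo x (j+1) = onesUpTo x j +
      (if h : j < n then (if x ⟨j, h⟩ = true then 1 else 0) else 0) := by
  by_cases h : j < n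
  · by_cases hx : x ⟨j, h⟩ = true
    · rw [dif_pos h, if_pos hx, onesUpTo, onesUpTo]
      have he : (Finset.univ.filter fun i : Fin n => i.val < j + 1 ∧ x i = true)
          = insert ⟨j, h⟩ (Finset.univ.filter fun i : Fin n => i.val < j ∧ x i = true) := by
        ext i
        simp only [Finset.mem_filter, Finset.mem_univ, true_and, Finset.mem_insert]
        constructor
        · rintro ⟨hij, hxi⟩
          rcases Nat.lt_succ_iff_lt_or_eq.mp hij with h' | h'
          · exact Or.inr ⟨h', hxi⟩
          · exact Or.inl (Fin.ext h')
        · rintro (rfl | ⟨hij, hxi⟩)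
          · exact ⟨Nat.lt_succ_self _, hx⟩
          · exact ⟨Nat.lt_succ_of_lt hij, hxi⟩
      rw [he, Finset.card_insert_of_notMem (by simp)]
    · rw [dif_pos h, if_neg hx, onesUpTo, onesUpTo, add_zero]
      congr 1
      apply Finset.filter_congr
      intro i _
      constructor
      · rintro ⟨hij, hxi⟩
        rcases Nat.lt_succ_iff_lt_or_eq.mp hij with h' | h'
        · exact ⟨h', hxi⟩
        · exact absurd (show x ⟨j, h⟩ = true from (Fin.ext h' : i = ⟨j, h⟩) ▸ hxi) hx
      · rintro ⟨hij, hxi⟩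
        exact ⟨Nat.lt_succ_of_lt hij, hxi⟩
  · rw [dif_neg h, add_zero, onesUpTo, onesUpTo]
    congr 1
    apply Finset.filter_congr
    intro i _
    have hi : i.val < n := i.isLt
    constructor
    · rintro ⟨_, hxi⟩; exact ⟨by omega, hxi⟩
    · rintro ⟨_, hxi⟩; exact ⟨by omega, hxi⟩

lemma onesUpTo_of_le (x : Fin n → Bool) {j : ℕ} (h : n ≤ j) : onesUpTo x j = wt x := by
  rw [onesUpTo, wt]
  congr 1
  apply Finset.filter_congr
  intro i _
  have hi : i.val < n := i.isLt
  constructor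
  · exact And.right
  · exact fun hx => ⟨by omega, hx⟩

lemma hgt_zero (x : Fin n → Bool) : hgt x 0 = 0 := by simp [hgt, onesUpTo_zero]

lemma hgt_succ_up (x : Fin n → Bool) {j : ℕ} (h : j < n) (hx : x ⟨j, h⟩ = true) :
    hgt x (j+1) = hgt x j + 1 := by
  rw [hgt, hgt, onesUpTo_succ, dif_pos h, if_pos hx]
  push_cast
  ring

lemma hgt_succ_down (x : Fin n → Bool) {j : ℕ} (hx : ∀ h : j < n, x ⟨j, h⟩ = false) :
    hgt x (j+1) = hgt x j - 1 := by
  rw [hgt, hgt, onesUpTo_succ]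
  by_cases h : j < n
  · rw [dif_pos h, if_neg (by simp [hx h])]
    push_cast; ring
  · rw [dif_neg h]
    push_cast; ring

lemma hgt_of_le (x : Fin n → Bool) {j : ℕ} (h : n ≤ j) : hgt x j = 2 * (wt x : ℤ) - j := by
  rw [hgt, onesUpTo_of_le x h]

lemma neg_le_hgt (x : Fin n → Bool) (j : ℕ) : -(j : ℤ) ≤ hgt x j := by
  rw [hgt]
  have : (0 : ℤ) ≤ (onesUpTo x j : ℤ) := Int.natCast_nonneg _
  omega

lemma n_le_extLen (x : Fin n → Bool) : n ≤ extLen x := le_max_left _ _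

def Dge (x : Fin n → Bool) (s : ℤ) (a b : ℕ) : ℕ :=
  ((Finset.Ico a b).filter fun j => (∀ h : j < n, x ⟨j, h⟩ = false) ∧ s ≤ hgt x j).card

def Uge (x : Fin n → Bool) (s : ℤ) (a b : ℕ) : ℕ :=
  ((Finset.Ico a b).filter fun j => (∃ h : j < n, x ⟨j, h⟩ = true) ∧ s ≤ hgt x (j+1)).card

lemma tele (x : Fin n → Bool) (s : ℤ) (a b : ℕ) (hab : a ≤ b) :
    Dge x s a b + (hgt x b - s + 1).toNat = Uge x s a b + (hgt x a - s + 1).toNat := by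
  induction b, hab using Nat.le_induction with
  | base => simp [Dge, Uge]
  | succ b hb ih =>
    unfold Dge Uge at ih ⊢
    rw [Nat.Ico_succ_right_eq_insert_Ico hb, Finset.filter_insert, Finset.filter_insert]
    have hnb : ∀ P : ℕ → Prop, ∀ hP : DecidablePred P, b ∉ (Finset.Ico a b).filter P :=
      fun P hP hm => by simp at hm
    by_cases hbn : b < n
    · by_cases hx : x ⟨b, hbn⟩ = true
      · have hd : ¬ ((∀ h : b < n, x ⟨b, h⟩ = false) ∧ s ≤ hgt x b) := by
          rintro ⟨hf, -⟩
          rw [hf hbn] at hx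
          exact Bool.noConfusion hx
        rw [if_neg hd]
        have hup := hgt_succ_up x hbn hx
        by_cases hs : s ≤ hgt x (b+1)
        · rw [if_pos ⟨⟨hbn, hx⟩, hs⟩, Finset.card_insert_of_notMem (hnb _ _)]
          omega
        · rw [if_neg (by rintro ⟨-, h2⟩; exact hs h2)]
          omega
      · have hdown : ∀ h : b < n, x ⟨b, h⟩ = false := fun _ => Bool.eq_false_iff.mpr hx
        have hu : ¬ ((∃ h : b < n, x ⟨b, h⟩ = true) ∧ s ≤ hgt x (b+1)) := by
          rintro ⟨⟨h', hx'⟩, -⟩; exact hx hx'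
        rw [if_neg hu]
        have hdn := hgt_succ_down x hdown
        by_cases hs : s ≤ hgt x b
        · rw [if_pos ⟨hdown, hs⟩, Finset.card_insert_of_notMem (hnb _ _)]
          omega
        · rw [if_neg (by rintro ⟨-, h2⟩; exact hs h2)]
          omega
    · have hdown : ∀ h : b < n, x ⟨b, h⟩ = false := fun h => absurd h hbn
      have hu : ¬ ((∃ h : b < n, x ⟨b, h⟩ = true) ∧ s ≤ hgt x (b+1)) := by
        rintro ⟨⟨h', -⟩, -⟩; exact hbn h'
      rw [if_neg hu]
      have hdn := hgt_succ_down x hdown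
      by_cases hs : s ≤ hgt x b
      · rw [if_pos ⟨hdown, hs⟩, Finset.card_insert_of_notMem (hnb _ _)]
        omega
      · rw [if_neg (by rintro ⟨-, h2⟩; exact hs h2)]
        omega

lemma card_filter_Ico_split (P : ℕ → Prop) [DecidablePred P] (a m b : ℕ) (h1 : a ≤ m)
    (h2 : m ≤ b) :
    ((Finset.Ico a b).filter P).card
      = ((Finset.Ico a m).filter P).card + ((Finset.Ico m b).filter P).card := by
  rw [← Finset.Ico_union_Ico_eq_Ico h1 h2, Finset.filter_union, Finset.card_union_of_disjoint]
  exact Finset.disjoint_filter_filter (Finset.Ico_disjoint_Ico_consecutive a m b)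

lemma Uge_eq_onesUpTo (x : Fin n → Bool) (s : ℤ) (b : ℕ)
    (hs : ∀ j, j < b → s ≤ hgt x (j+1)) : Uge x s 0 b = onesUpTo x b := by
  induction b with
  | zero => simp [Uge, onesUpTo_zero]
  | succ b ih =>
    unfold Uge at *
    rw [Nat.Ico_succ_right_eq_insert_Ico (Nat.zero_le _), Finset.filter_insert, onesUpTo_succ]
    by_cases hbn : b < n
    · by_cases hx : x ⟨b, hbn⟩ = true
      · rw [if_pos ⟨⟨hbn, hx⟩, hs b (by omega)⟩,
          Finset.card_insert_of_notMem (by simp),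
          dif_pos hbn, if_pos hx, ih (fun j hj => hs j (by omega))]
      · rw [if_neg (by rintro ⟨⟨h', hx'⟩, -⟩; exact hx hx'), dif_pos hbn, if_neg hx,
          ih (fun j hj => hs j (by omega)), add_zero]
    · rw [if_neg (by rintro ⟨⟨h', -⟩, -⟩; exact hbn h'), dif_neg hbn,
        ih (fun j hj => hs j (by omega)), add_zero]

lemma total_card (x : Fin n → Bool) :
    ((Finset.range (extLen x)).filter fun j => isDownStep x j).card + wt x = extLen x := by
  have hL : n ≤ extLen x := n_le_extLen x
  set L := extLen x with hLdef
  have t := tele x (-(L : ℤ) - 1) 0 L (Nat.zero_le _)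
  have hD : Dge x (-(L : ℤ) - 1) 0 L = ((Finset.range L).filter fun j => isDownStep x j).card := by
    unfold Dge
    rw [Finset.range_eq_Ico]
    congr 1
    apply Finset.filter_congr
    intro j hj
    simp only [Finset.mem_Ico] at hj
    constructor
    · rintro ⟨hd, -⟩
      exact ⟨hj.2, hd⟩
    · rintro ⟨-, hd⟩
      refine ⟨hd, ?_⟩
      have := neg_le_hgt x j
      omega
  have hU : Uge x (-(L : ℤ) - 1) 0 L = wt x := by
    rw [Uge_eq_onesUpTo x _ L (fun j hj => by have := neg_le_hgt x (j+1); omega),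
      onesUpTo_of_le x hL]
  rw [hD, hU] at t
  have h0 : hgt x 0 = 0 := hgt_zero x
  have hLv : hgt x L = 2 * (wt x : ℤ) - L := hgt_of_le x hL
  have hwn : wt x ≤ n := wt_le_n x
  have hLmax : L = max n (2 * wt x + 1) := rfl
  omega

def bset (x : Fin n → Bool) (d : ℕ) : Finset ℕ :=
  (Finset.range (extLen x)).filter fun j =>
    isDownStep x j ∧ (hgt x d < hgt x j ∨ (hgt x j = hgt x d ∧ d < j))

def aset (x : Fin n → Bool) (d : ℕ) : Finset ℕ :=
  (Finset.range (extLen x)).filter fun j =>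
    isDownStep x j ∧ (hgt x j < hgt x d ∨ (hgt x j = hgt x d ∧ j < d))

lemma ncard_bset (x : Fin n → Bool) (d : ℕ) :
    ({j : ℕ | isDownStep x j ∧ (hgt x d < hgt x j ∨ (hgt x j = hgt x d ∧ d < j))}).ncard
      = (bset x d).card := by
  rw [← Set.ncard_coe_finset]
  congr 1
  ext j
  simp only [Set.mem_setOf_eq, Finset.coe_filter, Finset.mem_range, bset]
  exact ⟨fun h => ⟨h.1.1, h⟩, fun h => h.2⟩

lemma partition (x : Fin n → Bool) (d : ℕ) (hdn : d < n) (hds : isDownStep x d) :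
    (bset x d).card + (aset x d).card + 1
      = ((Finset.range (extLen x)).filter fun j => isDownStep x j).card := by
  classical
  set T := (Finset.range (extLen x)).filter fun j => isDownStep x j with hT
  have hb : bset x d = T.filter fun j => hgt x d < hgt x j ∨ (hgt x j = hgt x d ∧ d < j) := by
    rw [hT, Finset.filter_filter]; rfl
  have ha : aset x d = T.filter fun j => hgt x j < hgt x d ∨ (hgt x j = hgt x d ∧ j < d) := by
    rw [hT, Finset.filter_filter]; rfl
  have hsplit := Finset.card_filter_add_card_filter_not
    (s := T) (p := fun j => hgt x d < hgt x j ∨ (hgt x j = hgt x d ∧ d < j))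
  have hneg : T.filter (fun j => ¬ (hgt x d < hgt x j ∨ (hgt x j = hgt x d ∧ d < j)))
      = insert d (T.filter fun j => hgt x j < hgt x d ∨ (hgt x j = hgt x d ∧ j < d)) := by
    ext j
    simp only [Finset.mem_filter, Finset.mem_insert, hT, Finset.mem_range]
    constructor
    · rintro ⟨⟨hjr, hjd⟩, hnc⟩
      by_cases hjd' : j = d
      · exact Or.inl hjd'
      · exact Or.inr ⟨⟨hjr, hjd⟩, by omega⟩
    · rintro (rfl | ⟨⟨hm1, hm2⟩, hc⟩)
      · exact ⟨⟨hds.1, hds⟩, by omega⟩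
      · exact ⟨⟨hm1, hm2⟩, by omega⟩
  have hd_not : d ∉ T.filter fun j => hgt x j < hgt x d ∨ (hgt x j = hgt x d ∧ j < d) := by
    simp only [Finset.mem_filter]
    rintro ⟨-, hc⟩
    omega
  rw [hneg, Finset.card_insert_of_notMem hd_not] at hsplit
  rw [hb, ha]
  omega

lemma onesUpTo_flip (x : Fin n → Bool) (d : ℕ) (hd : d < n) (hxd : x ⟨d, hd⟩ = false) (j : ℕ) :
    onesUpTo (fun t : Fin n => if t.val = d then true else x t) j
      = onesUpTo x j + (if d < j then 1 else 0) := by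
  by_cases hdj : d < j
  · rw [if_pos hdj, onesUpTo, onesUpTo]
    have he : (Finset.univ.filter fun i : Fin n =>
          i.val < j ∧ (if i.val = d then true else x i) = true)
        = insert ⟨d, hd⟩ (Finset.univ.filter fun i : Fin n => i.val < j ∧ x i = true) := by
      ext i
      simp only [Finset.mem_filter, Finset.mem_univ, true_and, Finset.mem_insert]
      constructor
      · rintro ⟨hij, hyi⟩
        by_cases hid : i.val = d
        · exact Or.inl (Fin.ext hid)
        · rw [if_neg hid] at hyi
          exact Or.inr ⟨hij, hyi⟩
      · rintro (rfl | ⟨hij, hxi⟩)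
        · exact ⟨hdj, by simp⟩
        · refine ⟨hij, ?_⟩
          by_cases hid : i.val = d
          · rw [if_pos hid]
          · rw [if_neg hid]; exact hxi
    rw [he, Finset.card_insert_of_notMem (by simp [hxd])]
  · rw [if_neg hdj, add_zero, onesUpTo, onesUpTo]
    congr 1
    apply Finset.filter_congr
    intro i _
    constructor
    · rintro ⟨hij, hyi⟩
      rw [if_neg (by omega : ¬ i.val = d)] at hyi
      exact ⟨hij, hyi⟩
    · rintro ⟨hij, hxi⟩
      rw [if_neg (by omega : ¬ i.val = d)]
      exact ⟨hij, hxi⟩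

lemma hgt_flip (x : Fin n → Bool) (d : ℕ) (hd : d < n) (hxd : x ⟨d, hd⟩ = false) (j : ℕ) :
    hgt (fun t : Fin n => if t.val = d then true else x t) j
      = hgt x j + (if d < j then 2 else 0) := by
  rw [hgt, hgt, onesUpTo_flip x d hd hxd j]
  split_ifs <;> push_cast <;> ring

lemma wt_flip (x : Fin n → Bool) (d : ℕ) (hd : d < n) (hxd : x ⟨d, hd⟩ = false) :
    wt (fun t : Fin n => if t.val = d then true else x t) = wt x + 1 := by
  rw [← onesUpTo_of_le (fun t : Fin n => if t.val = d then true else x t) (le_refl n),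
    ← onesUpTo_of_le x (le_refl n), onesUpTo_flip x d hd hxd n, if_pos hd]

lemma onesUpTo_bcomp_add (z : Fin n → Bool) (j : ℕ) :
    onesUpTo (bcomp z) j + onesUpTo z j = min j n := by
  induction j with
  | zero => simp [onesUpTo_zero]
  | succ j ih =>
    rw [onesUpTo_succ, onesUpTo_succ]
    by_cases h : j < n
    · rw [dif_pos h, dif_pos h]
      have hb : bcomp z ⟨j, h⟩ = !(z ⟨j, h⟩) := rfl
      cases hz : z ⟨j, h⟩ <;> simp only [hb, hz] <;> simp <;> omega
    · rw [dif_neg h, dif_neg h]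
      omega

lemma hgt_bcomp (z : Fin n → Bool) {j : ℕ} (hj : j ≤ n) : hgt (bcomp z) j = - hgt z j := by
  have h := onesUpTo_bcomp_add z j
  rw [hgt, hgt]
  omega

lemma wt_bcomp (z : Fin n → Bool) : wt (bcomp z) + wt z = n := by
  have h := onesUpTo_bcomp_add z n
  rw [onesUpTo_of_le _ le_rfl, onesUpTo_of_le _ le_rfl] at h
  simpa using h

lemma onesUpTo_brev (x : Fin n → Bool) {j : ℕ} (hj : j ≤ n) :
    onesUpTo (brev x) j + onesUpTo x (n - j) = wt x := by
  have h1 : (Finset.univ.filter fun i : Fin n => i.val < j ∧ brev x i = true).card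
      = (Finset.univ.filter fun i : Fin n => n - j ≤ i.val ∧ x i = true).card := by
    apply Finset.card_nbij' (i := fun i : Fin n => i.rev) (j := fun i : Fin n => i.rev)
    · intro a ha
      simp only [Finset.mem_coe, Finset.mem_filter, Finset.mem_univ, true_and] at ha ⊢
      have hv : a.rev.val = n - (a.val + 1) := rfl
      have hlt : a.val < n := a.isLt
      exact ⟨by omega, ha.2⟩
    · intro a ha
      simp only [Finset.mem_coe, Finset.mem_filter, Finset.mem_univ, true_and] at ha ⊢
      have hv : a.rev.val = n - (a.val + 1) := rfl
      have hlt : a.val < n := a.isLt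
      refine ⟨by omega, ?_⟩
      show x a.rev.rev = true
      rw [Fin.rev_rev]
      exact ha.2
    · intro a _
      exact Fin.rev_rev a
    · intro a _
      exact Fin.rev_rev a
  have h2 := Finset.card_filter_add_card_filter_not
    (s := (Finset.univ : Finset (Fin n)).filter fun i => x i = true)
    (p := fun i => n - j ≤ i.val)
  rw [Finset.filter_filter, Finset.filter_filter] at h2
  have e1 : (Finset.univ.filter fun i : Fin n => x i = true ∧ n - j ≤ i.val)
      = (Finset.univ.filter fun i : Fin n => n - j ≤ i.val ∧ x i = true) := by
    apply Finset.filter_congr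
    intro i _
    exact and_comm
  have e2 : (Finset.univ.filter fun i : Fin n => x i = true ∧ ¬ n - j ≤ i.val)
      = (Finset.univ.filter fun i : Fin n => i.val < n - j ∧ x i = true) := by
    apply Finset.filter_congr
    intro i _
    constructor
    · rintro ⟨ha, hb⟩
      exact ⟨by omega, ha⟩
    · rintro ⟨ha, hb⟩
      exact ⟨hb, by omega⟩
  rw [e1, e2] at h2
  rw [onesUpTo, onesUpTo, wt, h1]
  omega

lemma hgt_brev (x : Fin n → Bool) {j : ℕ} (hj : j ≤ n) :
    hgt (brev x) j = 2 * (wt x : ℤ) - n - hgt x (n - j) := by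
  have h := onesUpTo_brev x hj
  rw [hgt, hgt]
  have hc : ((n - j : ℕ) : ℤ) = (n : ℤ) - j := by omega
  omega

lemma wt_brev (x : Fin n → Bool) : wt (brev x) = wt x := by
  have h := onesUpTo_brev x (le_refl n)
  rw [Nat.sub_self, onesUpTo_zero] at h
  rw [← onesUpTo_of_le (brev x) (le_refl n)]
  omega

lemma comp_key (x : Fin n → Bool) (d : ℕ) (hd : d < n) (hxd : x ⟨d, hd⟩ = false) :
    (aset (bcomp (fun t : Fin n => if t.val = d then true else x t)) d).card
      = (bset x d).card := by
  set y : Fin n → Bool := fun t => if t.val = d then true else x t with hy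
  set z := bcomp y with hz
  set k := wt x with hk
  set h := hgt x d with hh
  have hyval : ∀ (j : ℕ) (hjn : j < n), y ⟨j, hjn⟩ = (if j = d then true else x ⟨j, hjn⟩) :=
    fun j hjn => rfl
  have hzval : ∀ (j : ℕ) (hjn : j < n), z ⟨j, hjn⟩ = !(y ⟨j, hjn⟩) := fun j hjn => rfl
  have hky : wt y = k + 1 := wt_flip x d hd hxd
  have hkn : k + 1 ≤ n := hky ▸ wt_le_n y
  have hwz : wt z + (k + 1) = n := by rw [← hky]; exact wt_bcomp y
  have hLx : extLen x = max n (2 * k + 1) := rfl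
  have hLz : extLen z = max n (2 * wt z + 1) := rfl
  have hnLx : n ≤ extLen x := n_le_extLen x
  have hnLz : n ≤ extLen z := n_le_extLen z
  have hyj : ∀ j : ℕ, hgt y j = hgt x j + (if d < j then 2 else 0) := hgt_flip x d hd hxd
  have hzj : ∀ j : ℕ, j ≤ n → hgt z j = - hgt y j := fun j hj => hgt_bcomp y hj
  have hzd : hgt z d = - h := by
    rw [hzj d (le_of_lt hd), hyj d, if_neg (lt_irrefl d), add_zero]
  have hstep : hgt x (d + 1) = h - 1 := by
    rw [hgt_succ_down x (fun _ => hxd)]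
  have hb : (bset x d).card = Dge x (h + 1) 0 d + Dge x h (d + 1) (extLen x) := by
    unfold bset
    rw [Finset.range_eq_Ico,
      card_filter_Ico_split _ 0 (d + 1) (extLen x) (by omega) (by omega),
      card_filter_Ico_split _ 0 d (d + 1) (by omega) (by omega)]
    have p2 : ((Finset.Ico d (d + 1)).filter fun j =>
        isDownStep x j ∧ (hgt x d < hgt x j ∨ (hgt x j = hgt x d ∧ d < j))).card = 0 := by
      rw [Finset.card_eq_zero, Finset.filter_eq_empty_iff]
      intro j hj
      simp only [Finset.mem_Ico] at hj
      have hjd : j = d := by omega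
      subst hjd
      rintro ⟨-, hc⟩
      omega
    have p1 : ((Finset.Ico 0 d).filter fun j =>
        isDownStep x j ∧ (hgt x d < hgt x j ∨ (hgt x j = hgt x d ∧ d < j)))
        = (Finset.Ico 0 d).filter fun j =>
            (∀ h' : j < n, x ⟨j, h'⟩ = false) ∧ h + 1 ≤ hgt x j := by
      apply Finset.filter_congr
      intro j hj
      simp only [Finset.mem_Ico] at hj
      constructor
      · rintro ⟨⟨-, hdn'⟩, hc⟩
        exact ⟨hdn', by omega⟩
      · rintro ⟨hdn', hs⟩
        exact ⟨⟨by omega, hdn'⟩, by omega⟩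
    have p3 : ((Finset.Ico (d + 1) (extLen x)).filter fun j =>
        isDownStep x j ∧ (hgt x d < hgt x j ∨ (hgt x j = hgt x d ∧ d < j)))
        = (Finset.Ico (d + 1) (extLen x)).filter fun j =>
            (∀ h' : j < n, x ⟨j, h'⟩ = false) ∧ h ≤ hgt x j := by
      apply Finset.filter_congr
      intro j hj
      simp only [Finset.mem_Ico] at hj
      constructor
      · rintro ⟨⟨-, hdn'⟩, hc⟩
        exact ⟨hdn', by omega⟩
      · rintro ⟨hdn', hs⟩
        exact ⟨⟨by omega, hdn'⟩, by omega⟩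
    rw [p1, p2, p3]
    unfold Dge
    omega
  have ha : (aset z d).card = Uge x (h + 1) 0 d + Uge x h (d + 1) n
      + (extLen z - max n ((2 * (wt z : ℤ) + h + 1).toNat)) := by
    unfold aset
    rw [Finset.range_eq_Ico,
      card_filter_Ico_split _ 0 n (extLen z) (by omega) hnLz,
      card_filter_Ico_split _ 0 (d + 1) n (by omega) (by omega),
      card_filter_Ico_split _ 0 d (d + 1) (by omega) (by omega)]
    have q2 : ((Finset.Ico d (d + 1)).filter fun j =>
        isDownStep z j ∧ (hgt z j < hgt z d ∨ (hgt z j = hgt z d ∧ j < d))).card = 0 := by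
      rw [Finset.card_eq_zero, Finset.filter_eq_empty_iff]
      intro j hj
      simp only [Finset.mem_Ico] at hj
      have hjd : j = d := by omega
      subst hjd
      rintro ⟨-, hc⟩
      omega
    have q1 : ((Finset.Ico 0 d).filter fun j =>
        isDownStep z j ∧ (hgt z j < hgt z d ∨ (hgt z j = hgt z d ∧ j < d)))
        = (Finset.Ico 0 d).filter fun j =>
            (∃ h' : j < n, x ⟨j, h'⟩ = true) ∧ h + 1 ≤ hgt x (j + 1) := by
      apply Finset.filter_congr
      intro j hj
      simp only [Finset.mem_Ico] at hj
      have hjn : j < n := by omega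
      have hy1 : hgt y j = hgt x j := by
        rw [hyj j, if_neg (by omega : ¬ d < j), add_zero]
      have hzjeq : hgt z j = - hgt x j := by
        rw [hzj j (by omega), hy1]
      constructor
      · rintro ⟨⟨-, hdz⟩, hc⟩
        have hyt : y ⟨j, hjn⟩ = true := by
          have hzf := hdz hjn
          rw [hzval j hjn] at hzf
          simpa using hzf
        have hxt : x ⟨j, hjn⟩ = true := by
          rw [hyval j hjn, if_neg (by omega : ¬ j = d)] at hyt
          exact hyt
        have hup : hgt x (j + 1) = hgt x j + 1 := hgt_succ_up x hjn hxt
        exact ⟨⟨hjn, hxt⟩, by omega⟩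
      · rintro ⟨⟨hjn', hxt⟩, hs⟩
        have hxt' : x ⟨j, hjn⟩ = true := hxt
        have hup : hgt x (j + 1) = hgt x j + 1 := hgt_succ_up x hjn hxt'
        refine ⟨⟨by omega, fun h' => ?_⟩, by omega⟩
        rw [hzval j h', hyval j h', if_neg (by omega : ¬ j = d)]
        show (!(x ⟨j, hjn⟩)) = false
        rw [hxt']
        rfl
    have q3 : ((Finset.Ico (d + 1) n).filter fun j =>
        isDownStep z j ∧ (hgt z j < hgt z d ∨ (hgt z j = hgt z d ∧ j < d)))
        = (Finset.Ico (d + 1) n).filter fun j =>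
            (∃ h' : j < n, x ⟨j, h'⟩ = true) ∧ h ≤ hgt x (j + 1) := by
      apply Finset.filter_congr
      intro j hj
      simp only [Finset.mem_Ico] at hj
      have hjn : j < n := hj.2
      have hy1 : hgt y j = hgt x j + 2 := by
        rw [hyj j, if_pos (by omega : d < j)]
      have hzjeq : hgt z j = - hgt x j - 2 := by
        rw [hzj j (by omega), hy1]
        ring
      constructor
      · rintro ⟨⟨-, hdz⟩, hc⟩
        have hyt : y ⟨j, hjn⟩ = true := by
          have hzf := hdz hjn
          rw [hzval j hjn] at hzf
          simpa using hzf
        have hxt : x ⟨j, hjn⟩ = true := by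
          rw [hyval j hjn, if_neg (by omega : ¬ j = d)] at hyt
          exact hyt
        have hup : hgt x (j + 1) = hgt x j + 1 := hgt_succ_up x hjn hxt
        exact ⟨⟨hjn, hxt⟩, by omega⟩
      · rintro ⟨⟨hjn', hxt⟩, hs⟩
        have hxt' : x ⟨j, hjn⟩ = true := hxt
        have hup : hgt x (j + 1) = hgt x j + 1 := hgt_succ_up x hjn hxt'
        refine ⟨⟨by omega, fun h' => ?_⟩, by omega⟩
        rw [hzval j h', hyval j h', if_neg (by omega : ¬ j = d)]
        show (!(x ⟨j, hjn⟩)) = false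
        rw [hxt']
        rfl
    have q4 : ((Finset.Ico n (extLen z)).filter fun j =>
        isDownStep z j ∧ (hgt z j < hgt z d ∨ (hgt z j = hgt z d ∧ j < d)))
        = (Finset.Ico n (extLen z)).filter fun j => (2 * (wt z : ℤ) + h + 1).toNat ≤ j := by
      apply Finset.filter_congr
      intro j hj
      simp only [Finset.mem_Ico] at hj
      have hzf : hgt z j = 2 * (wt z : ℤ) - j := hgt_of_le z hj.1
      constructor
      · rintro ⟨-, hc⟩
        rw [Int.toNat_le]
        omega
      · intro hcj
        rw [Int.toNat_le] at hcj
        exact ⟨⟨hj.2, fun h' => absurd h' (by omega)⟩, by omega⟩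
    rw [q1, q2, q3, q4, Finset.Ico_filter_le, Nat.card_Ico]
    unfold Uge
    omega
  have t1 := tele x (h + 1) 0 d (Nat.zero_le _)
  rw [hgt_zero x] at t1
  have t2 := tele x h (d + 1) (extLen x) (by omega)
  rw [hstep, hgt_of_le x hnLx] at t2
  have u2 : Uge x h (d + 1) (extLen x) = Uge x h (d + 1) n := by
    unfold Uge
    rw [card_filter_Ico_split _ (d + 1) n (extLen x) (by omega) hnLx]
    have hz0 : ((Finset.Ico n (extLen x)).filter fun j =>
        (∃ h' : j < n, x ⟨j, h'⟩ = true) ∧ h ≤ hgt x (j + 1)).card = 0 := by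
      rw [Finset.card_eq_zero, Finset.filter_eq_empty_iff]
      intro j hj
      simp only [Finset.mem_Ico] at hj
      rintro ⟨⟨h', -⟩, -⟩
      omega
    omega
  rw [u2] at t2
  rw [ha, hb]
  omega

lemma rev_key (x : Fin n → Bool) (d : ℕ) (hd : d < n) (hxd : x ⟨d, hd⟩ = false) :
    (aset (brev x) (n - 1 - d)).card = (bset x d).card := by
  set w := wt x with hw
  set h := hgt x d with hh
  have hwb : wt (brev x) = w := wt_brev x
  have hLb : extLen (brev x) = extLen x := by unfold extLen; rw [hwb]
  have hnL : n ≤ extLen x := n_le_extLen x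
  have hLmax : extLen x = max n (2 * w + 1) := rfl
  set d' := n - 1 - d with hd'
  have hd'n : d' < n := by omega
  have hstep : hgt x (d + 1) = h - 1 := by rw [hgt_succ_down x (fun _ => hxd)]
  have hbd' : hgt (brev x) d' = 2 * (w : ℤ) - n - h + 1 := by
    rw [hgt_brev x (by omega : d' ≤ n), show n - d' = d + 1 from by omega, hstep, hw]
    ring
  have hsa : (aset (brev x) d').card
      = ((Finset.Ico 0 n).filter fun j => isDownStep (brev x) j ∧
          (hgt (brev x) j < hgt (brev x) d' ∨ (hgt (brev x) j = hgt (brev x) d' ∧ j < d'))).card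
      + ((Finset.Ico n (extLen x)).filter fun j => isDownStep (brev x) j ∧
          (hgt (brev x) j < hgt (brev x) d' ∨ (hgt (brev x) j = hgt (brev x) d' ∧ j < d'))).card := by
    unfold aset
    rw [hLb, Finset.range_eq_Ico]
    exact card_filter_Ico_split _ 0 n (extLen x) (Nat.zero_le _) hnL
  have hsb : (bset x d).card
      = ((Finset.Ico 0 n).filter fun j => isDownStep x j ∧
          (hgt x d < hgt x j ∨ (hgt x j = hgt x d ∧ d < j))).card
      + ((Finset.Ico n (extLen x)).filter fun j => isDownStep x j ∧
          (hgt x d < hgt x j ∨ (hgt x j = hgt x d ∧ d < j))).card := by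
    unfold bset
    rw [Finset.range_eq_Ico]
    exact card_filter_Ico_split _ 0 n (extLen x) (Nat.zero_le _) hnL
  have real_eq : ((Finset.Ico 0 n).filter fun j => isDownStep (brev x) j ∧
          (hgt (brev x) j < hgt (brev x) d' ∨ (hgt (brev x) j = hgt (brev x) d' ∧ j < d'))).card
      = ((Finset.Ico 0 n).filter fun j => isDownStep x j ∧
          (hgt x d < hgt x j ∨ (hgt x j = hgt x d ∧ d < j))).card := by
    apply Finset.card_nbij' (i := fun j => n - 1 - j) (j := fun j => n - 1 - j)
    · intro a ha
      simp only [Finset.mem_coe, Finset.mem_filter, Finset.mem_Ico] at ha ⊢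
      obtain ⟨⟨-, han⟩, ⟨-, hadown⟩, hacond⟩ := ha
      have hxa : x ⟨n - 1 - a, by omega⟩ = false := by
        have hv := hadown han
        have hrev : (⟨a, han⟩ : Fin n).rev = ⟨n - 1 - a, by omega⟩ := by
          apply Fin.ext
          show n - (a + 1) = n - 1 - a
          omega
        rw [show brev x ⟨a, han⟩ = x (⟨a, han⟩ : Fin n).rev from rfl, hrev] at hv
        exact hv
      have e1 : hgt (brev x) a = 2 * (w : ℤ) - n - hgt x (n - a) := by
        rw [hgt_brev x (by omega : a ≤ n), hw]
      rw [show n - a = (n - 1 - a) + 1 from by omega] at e1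
      have e3 : hgt x ((n - 1 - a) + 1) = hgt x (n - 1 - a) - 1 :=
        hgt_succ_down x (fun h' => hxa)
      refine ⟨⟨by omega, by omega⟩, ⟨by omega, fun h' => hxa⟩, by omega⟩
    · intro b hb
      simp only [Finset.mem_coe, Finset.mem_filter, Finset.mem_Ico] at hb ⊢
      obtain ⟨⟨-, hbn⟩, ⟨-, hbdown⟩, hbcond⟩ := hb
      have hxb : x ⟨b, hbn⟩ = false := hbdown hbn
      have hba : brev x ⟨n - 1 - b, by omega⟩ = false := by
        have hrev : (⟨n - 1 - b, by omega⟩ : Fin n).rev = ⟨b, hbn⟩ := by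
          apply Fin.ext
          show n - ((n - 1 - b) + 1) = b
          omega
        rw [show brev x ⟨n - 1 - b, by omega⟩ = x ((⟨n - 1 - b, by omega⟩ : Fin n).rev) from rfl,
          hrev]
        exact hxb
      have e1 : hgt (brev x) (n - 1 - b) = 2 * (w : ℤ) - n - hgt x (n - (n - 1 - b)) := by
        rw [hgt_brev x (by omega : n - 1 - b ≤ n), hw]
      rw [show n - (n - 1 - b) = b + 1 from by omega] at e1
      have e3 : hgt x (b + 1) = hgt x b - 1 := hgt_succ_down x (fun h' => hxb)
      refine ⟨⟨by omega, by omega⟩, ⟨by omega, fun h' => hba⟩, by omega⟩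
    · intro a ha
      simp only [Finset.mem_coe, Finset.mem_filter, Finset.mem_Ico] at ha ⊢
      omega
    · intro b hb
      simp only [Finset.mem_coe, Finset.mem_filter, Finset.mem_Ico] at hb ⊢
      omega
  have app_eq : ((Finset.Ico n (extLen x)).filter fun j => isDownStep (brev x) j ∧
          (hgt (brev x) j < hgt (brev x) d' ∨ (hgt (brev x) j = hgt (brev x) d' ∧ j < d'))).card
      = ((Finset.Ico n (extLen x)).filter fun j => isDownStep x j ∧
          (hgt x d < hgt x j ∨ (hgt x j = hgt x d ∧ d < j))).card := by
    apply Finset.card_nbij' (i := fun j => n + extLen x - 1 - j)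
      (j := fun j => n + extLen x - 1 - j)
    · intro a ha
      simp only [Finset.mem_coe, Finset.mem_filter, Finset.mem_Ico] at ha ⊢
      obtain ⟨⟨hna, haL⟩, -, hacond⟩ := ha
      have hLval : extLen x = 2 * w + 1 := by omega
      have eb : hgt (brev x) a = 2 * (w : ℤ) - a := by
        rw [hgt_of_le (brev x) hna, hwb]
      have ex : hgt x (n + extLen x - 1 - a) = 2 * (w : ℤ) - ((n + extLen x - 1 - a : ℕ) : ℤ) :=
        hgt_of_le x (by omega)
      refine ⟨⟨by omega, by omega⟩, ⟨by omega, fun h' => absurd h' (by omega)⟩, by omega⟩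
    · intro b hb
      simp only [Finset.mem_coe, Finset.mem_filter, Finset.mem_Ico] at hb ⊢
      obtain ⟨⟨hnb, hbL⟩, -, hbcond⟩ := hb
      have hLval : extLen x = 2 * w + 1 := by omega
      have eb : hgt x b = 2 * (w : ℤ) - b := hgt_of_le x hnb
      have ex : hgt (brev x) (n + extLen x - 1 - b)
          = 2 * (w : ℤ) - ((n + extLen x - 1 - b : ℕ) : ℤ) := by
        rw [hgt_of_le (brev x) (by omega), hwb]
      refine ⟨⟨by omega, by omega⟩, ⟨by omega, fun h' => absurd h' (by omega)⟩, by omega⟩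
    · intro a ha
      simp only [Finset.mem_coe, Finset.mem_filter, Finset.mem_Ico] at ha ⊢
      omega
    · intro b hb
      simp only [Finset.mem_coe, Finset.mem_filter, Finset.mem_Ico] at hb ⊢
      omega
  rw [hsa, hsb, real_eq, app_eq]

lemma extLen_cases (v : Fin n → Bool) :
    (2 * wt v + 1 ≤ n ∧ extLen v = n) ∨ (n ≤ 2 * wt v + 1 ∧ extLen v = 2 * wt v + 1) := by
  unfold extLen
  rcases le_total n (2 * wt v + 1) with h | h
  · exact Or.inr ⟨h, max_eq_right h⟩
  · exact Or.inl ⟨h, max_eq_left h⟩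

lemma comp_dir {k i : ℕ} {x y : Fin n → Bool} (hxy : lexUp n k i x y) :
    lexUp n (n - k - 1) (max k (n - k - 1) - i) (bcomp y) (bcomp x) := by
  obtain ⟨hwt, d, hdn, hds, hcard, hy⟩ := hxy
  subst hy
  subst hwt
  have hxd : x ⟨d, hdn⟩ = false := hds.2 hdn
  set y : Fin n → Bool := fun t => if t.val = d then true else x t with hy
  set z := bcomp y with hz
  have hky : wt y = wt x + 1 := wt_flip x d hdn hxd
  have hkn : wt x + 1 ≤ n := hky ▸ wt_le_n y
  have hwz : wt z + (wt x + 1) = n := by rw [← hky]; exact wt_bcomp y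
  have hcard' : (bset x d).card = i := by rw [← ncard_bset]; exact hcard
  have hkey := comp_key x d hdn hxd
  rw [← hy, ← hz] at hkey
  have htz := total_card z
  have htx := total_card x
  have hdz : isDownStep z d := by
    refine ⟨lt_of_lt_of_le hdn (n_le_extLen z), fun h' => ?_⟩
    show (!(y ⟨d, h'⟩)) = false
    rw [show y ⟨d, h'⟩ = if d = d then true else x ⟨d, h'⟩ from rfl, if_pos rfl]
    rfl
  have hpz := partition z d hdn hdz
  have hpx := partition x d hdn hds
  refine ⟨by omega, d, hdn, hdz, ?_, ?_⟩
  · rw [ncard_bset]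
    rcases le_total (wt x) (n - wt x - 1) with hm | hm
    · rw [max_eq_right hm]
      rcases extLen_cases x with ⟨hx1, hx2⟩ | ⟨hx1, hx2⟩ <;>
        rcases extLen_cases z with ⟨hz1, hz2⟩ | ⟨hz1, hz2⟩ <;> omega
    · rw [max_eq_left hm]
      rcases extLen_cases x with ⟨hx1, hx2⟩ | ⟨hx1, hx2⟩ <;>
        rcases extLen_cases z with ⟨hz1, hz2⟩ | ⟨hz1, hz2⟩ <;> omega
  · funext t
    by_cases ht : t.val = d
    · rw [if_pos ht]
      show (!(x t)) = true
      have htd : t = ⟨d, hdn⟩ := Fin.ext ht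
      rw [htd, hxd]
      rfl
    · rw [if_neg ht]
      show (!(x t)) = z t
      rw [show z t = !(y t) from rfl, show y t = if t.val = d then true else x t from rfl,
        if_neg ht]

lemma rev_dir {k i : ℕ} {x y : Fin n → Bool} (hxy : lexUp n k i x y) :
    lexUp n k (max k (n - k - 1) - i) (brev x) (brev y) := by
  obtain ⟨hwt, d, hdn, hds, hcard, hy⟩ := hxy
  subst hy
  subst hwt
  have hxd : x ⟨d, hdn⟩ = false := hds.2 hdn
  have hwb : wt (brev x) = wt x := wt_brev x
  have hLb : extLen (brev x) = extLen x := by unfold extLen; rw [hwb]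
  set d' := n - 1 - d with hd'
  have hd'n : d' < n := by omega
  have hbval : brev x ⟨d', hd'n⟩ = false := by
    have hrev : (⟨d', hd'n⟩ : Fin n).rev = ⟨d, hdn⟩ := by
      apply Fin.ext
      show n - (d' + 1) = d
      omega
    rw [show brev x ⟨d', hd'n⟩ = x ((⟨d', hd'n⟩ : Fin n).rev) from rfl, hrev]
    exact hxd
  have hdb : isDownStep (brev x) d' := by
    refine ⟨?_, fun h' => hbval⟩
    rw [hLb]
    have := n_le_extLen x
    omega
  have hcard' : (bset x d).card = i := by rw [← ncard_bset]; exact hcard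
  have hkey := rev_key x d hdn hxd
  rw [← hd'] at hkey
  have hpb := partition (brev x) d' hd'n hdb
  have hpx := partition x d hdn hds
  have htb := total_card (brev x)
  have htx := total_card x
  refine ⟨hwb, d', hd'n, hdb, ?_, ?_⟩
  · rw [ncard_bset]
    rcases le_total (wt x) (n - wt x - 1) with hm | hm
    · rw [max_eq_right hm]
      rcases extLen_cases x with ⟨hx1, hx2⟩ | ⟨hx1, hx2⟩ <;> omega
    · rw [max_eq_left hm]
      rcases extLen_cases x with ⟨hx1, hx2⟩ | ⟨hx1, hx2⟩ <;> omega
  · funext t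
    have hrv : (t.rev).val = n - (t.val + 1) := rfl
    have htn : t.val < n := t.isLt
    by_cases ht : t.val = d'
    · rw [if_pos ht]
      show (if (t.rev).val = d then true else x t.rev) = true
      rw [if_pos (by omega)]
    · rw [if_neg ht]
      show (if (t.rev).val = d then true else x t.rev) = x t.rev
      rw [if_neg (by omega)]

lemma bcomp_bcomp (x : Fin n → Bool) : bcomp (bcomp x) = x := by
  funext t
  show (!(!(x t))) = x t
  exact Bool.not_not _

lemma brev_brev (x : Fin n → Bool) : brev (brev x) = x := by
  funext t
  show x t.rev.rev = x t
  rw [Fin.rev_rev]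

lemma comp_iff (k i : ℕ) (hn : 1 ≤ n) (hk : k ≤ n - 1) (hi : i ≤ max k (n - k - 1))
    (x y : Fin n → Bool) :
    lexUp n k i x y ↔ lexUp n (n - k - 1) (max k (n - k - 1) - i) (bcomp y) (bcomp x) := by
  constructor
  · exact comp_dir
  · intro hzz
    have h2 := comp_dir hzz
    rw [bcomp_bcomp, bcomp_bcomp] at h2
    have e1 : n - (n - k - 1) - 1 = k := by omega
    rw [e1] at h2
    have e2 : max (n - k - 1) k - (max k (n - k - 1) - i) = i := by
      rcases le_total k (n - k - 1) with hm | hm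
      · rw [max_eq_left hm, max_eq_right hm]
        rw [max_eq_right hm] at hi
        omega
      · rw [max_eq_right hm, max_eq_left hm]
        rw [max_eq_left hm] at hi
        omega
    rw [e2] at h2
    exact h2

lemma rev_iff (k i : ℕ) (hn : 1 ≤ n) (hk : k ≤ n - 1) (hi : i ≤ max k (n - k - 1))
    (x y : Fin n → Bool) :
    lexUp n k i x y ↔ lexUp n k (max k (n - k - 1) - i) (brev x) (brev y) := by
  constructor
  · exact rev_dir
  · intro hzz
    have h2 := rev_dir hzz
    rw [brev_brev, brev_brev] at h2
    have e2 : max k (n - k - 1) - (max k (n - k - 1) - i) = i := by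
      rcases le_total k (n - k - 1) with hm | hm
      · rw [max_eq_right hm]
        rw [max_eq_right hm] at hi
        omega
      · rw [max_eq_left hm]
        rw [max_eq_left hm] at hi
        omega
    rw [e2] at h2
    exact h2

end LexSym

/-- For `0 ≤ k ≤ n−1`, `l := max{k, n−k−1}` and `0 ≤ i ≤ l`: complementing both endpoints of
every edge of `M^i_{n,k}` yields exactly `M^{l−i}_{n,n−k−1}` (the complement of the lower
endpoint becoming the upper endpoint), reversing both endpoints yields exactly `M^{l−i}_{n,k}`,
and complementing-then-reversing yields exactly `M^i_{n,n−k−1}`. -/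
theorem lexical_matching_symmetries (n k i : ℕ) (hn : 1 ≤ n) (hk : k ≤ n - 1)
    (hi : i ≤ max k (n - k - 1)) :
    (∀ x y : Fin n → Bool,
      lexUp n k i x y ↔ lexUp n (n - k - 1) (max k (n - k - 1) - i) (bcomp y) (bcomp x)) ∧
    (∀ x y : Fin n → Bool,
      lexUp n k i x y ↔ lexUp n k (max k (n - k - 1) - i) (brev x) (brev y)) ∧
    (∀ x y : Fin n → Bool,
      lexUp n k i x y ↔ lexUp n (n - k - 1) i (brev (bcomp y)) (brev (bcomp x))) := by
  have hnk : n - (n - k - 1) - 1 = k := by omega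
  have hk2 : n - k - 1 ≤ n - 1 := by omega
  have hi2 : max k (n - k - 1) - i ≤ max (n - k - 1) (n - (n - k - 1) - 1) := by
    rw [hnk, max_comm (n - k - 1) k]
    exact Nat.sub_le _ _
  refine ⟨fun x y => LexSym.comp_iff k i hn hk hi x y,
    fun x y => LexSym.rev_iff k i hn hk hi x y, fun x y => ?_⟩
  rw [LexSym.comp_iff k i hn hk hi x y,
    LexSym.rev_iff (n - k - 1) (max k (n - k - 1) - i) hn hk2 hi2 (bcomp y) (bcomp x)]
  have e : max (n - k - 1) (n - (n - k - 1) - 1) - (max k (n - k - 1) - i) = i := by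
    rw [hnk, max_comm (n - k - 1) k]
    rcases le_total k (n - k - 1) with hm | hm
    · rw [max_eq_right hm]
      rw [max_eq_right hm] at hi
      omega
    · rw [max_eq_left hm]
      rw [max_eq_left hm] at hi
      omega
  rw [e]
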